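/- For any random variables W, X, Y, Z on a finite probability space: I(X;Y|W) = H(Z|W) + I(X;Y|W,Z) whenever H(Z|X) = 0 and H(Z|Y) = 0. -/
import Mathlib


open Finset

/-- Probability mass of the event `X = a` under weights `p`. -/
noncomputable def pmass {Ω α : Type} [Fintype Ω] [DecidableEq α]
    (p : Ω → ℝ) (X : Ω → α) (a : α) : ℝ :=
  ∑ ω, if X ω = a then p ω else 0

/-- Shannon entropy (base 2) of a random variable `X` on a finite space. -/
noncomputable def ent {Ω α : Type} [Fintype Ω] [Fintype α] [DecidableEq α]
    (p : Ω → ℝ) (X : Ω → α) : ℝ :=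
  ∑ a, -(pmass p X a * Real.logb 2 (pmass p X a))

/-- Conditional Shannon entropy `H(X|Y) = H(X,Y) - H(Y)`. -/
noncomputable def condEnt {Ω α β : Type} [Fintype Ω] [Fintype α] [Fintype β]
    [DecidableEq α] [DecidableEq β] (p : Ω → ℝ) (X : Ω → α) (Y : Ω → β) : ℝ :=
  ent p (fun ω => (X ω, Y ω)) - ent p Y

/-- Conditional mutual information `I(X;Y|W) = H(X|W) + H(Y|W) - H(X,Y|W)`. -/
noncomputable def condMI {Ω α β γ : Type} [Fintype Ω] [Fintype α] [Fintype β] [Fintype γ]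
    [DecidableEq α] [DecidableEq β] [DecidableEq γ]
    (p : Ω → ℝ) (X : Ω → α) (Y : Ω → β) (W : Ω → γ) : ℝ :=
  condEnt p X W + condEnt p Y W - condEnt p (fun ω => (X ω, Y ω)) W

section helpers

variable {Ω α β γ : Type} [Fintype Ω]

lemma pmass_nonneg [DecidableEq α] (p : Ω → ℝ) (hp0 : ∀ ω, 0 ≤ p ω) (X : Ω → α) (a : α) :
    0 ≤ pmass p X a :=
  Finset.sum_nonneg fun ω _ => by split <;> [exact hp0 ω; exact le_rfl]

lemma pmass_pair_le [DecidableEq α] [DecidableEq γ] (p : Ω → ℝ) (hp0 : ∀ ω, 0 ≤ p ω)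
    (X : Ω → α) (Z : Ω → γ) (c : γ) (a : α) :
    pmass p (fun ω => (Z ω, X ω)) (c, a) ≤ pmass p X a := by
  refine Finset.sum_le_sum fun ω _ => ?_
  by_cases h : (Z ω, X ω) = (c, a)
  · rw [if_pos h, if_pos (congrArg Prod.snd h)]
  · rw [if_neg h]
    split <;> [exact hp0 ω; exact le_rfl]

lemma pmass_pair_sum [DecidableEq α] [DecidableEq γ] [Fintype γ] (p : Ω → ℝ)
    (X : Ω → α) (Z : Ω → γ) (a : α) :
    ∑ c, pmass p (fun ω => (Z ω, X ω)) (c, a) = pmass p X a := by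
  unfold pmass
  rw [Finset.sum_comm]
  refine Finset.sum_congr rfl fun ω _ => ?_
  by_cases h : X ω = a
  · simp [Prod.ext_iff, h]
  · simp [Prod.ext_iff, h]

/-- Entropy is invariant under injective relabeling. -/
lemma ent_comp_inj [Fintype α] [Fintype β] [DecidableEq α] [DecidableEq β]
    (p : Ω → ℝ) (X : Ω → α) (e : α → β) (he : Function.Injective e) :
    ent p (fun ω => e (X ω)) = ent p X := by
  unfold ent
  rw [← Finset.sum_subset (Finset.subset_univ (Finset.univ.image e))]
  · rw [Finset.sum_image (fun x _ y _ h => he h)]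
    refine Finset.sum_congr rfl fun a _ => ?_
    have : pmass p (fun ω => e (X ω)) (e a) = pmass p X a := by
      unfold pmass
      refine Finset.sum_congr rfl fun ω _ => ?_
      simp [he.eq_iff]
    rw [this]
  · intro b _ hb
    have : pmass p (fun ω => e (X ω)) b = 0 := by
      unfold pmass
      refine Finset.sum_eq_zero fun ω _ => ?_
      have : e (X ω) ≠ b := fun h => hb (Finset.mem_image.2 ⟨X ω, Finset.mem_univ _, h⟩)
      simp [this]
    simp [this]

/-- Adding a variable that is a.e. determined by `V` does not change entropy. -/
lemma ent_pair_dep [Fintype α] [Fintype γ] [DecidableEq α] [DecidableEq γ]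
    (p : Ω → ℝ) (hp0 : ∀ ω, 0 ≤ p ω) (V : Ω → α) (Z : Ω → γ)
    (hdep : ∀ ω ω', p ω ≠ 0 → p ω' ≠ 0 → V ω = V ω' → Z ω = Z ω') :
    ent p (fun ω => (Z ω, V ω)) = ent p V := by
  unfold ent
  rw [Fintype.sum_prod_type]
  rw [Finset.sum_comm]
  refine Finset.sum_congr rfl fun a _ => ?_
  by_cases hP : pmass p V a = 0
  · have hq : ∀ c, pmass p (fun ω => (Z ω, V ω)) (c, a) = 0 := fun c =>
      le_antisymm (hP ▸ pmass_pair_le p hp0 V Z c a) (pmass_nonneg p hp0 _ _)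
    simp [hq, hP]
  · -- there is ω0 with p ω0 ≠ 0 and V ω0 = a
    have hex : ∃ ω0, p ω0 ≠ 0 ∧ V ω0 = a := by
      by_contra h
      push_neg at h
      apply hP
      refine Finset.sum_eq_zero fun ω _ => ?_
      by_cases hv : V ω = a
      · have hpz : p ω = 0 := by_contra fun hpz => h ω hpz hv
        simp [hpz]
      · simp [hv]
    obtain ⟨ω0, hω0, hVω0⟩ := hex
    set c0 := Z ω0 with hc0
    have hqz : ∀ c, c ≠ c0 → pmass p (fun ω => (Z ω, V ω)) (c, a) = 0 := by
      intro c hc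
      refine Finset.sum_eq_zero fun ω _ => ?_
      by_cases hpω : p ω = 0
      · split <;> simp [hpω]
      · by_cases hv : (Z ω, V ω) = (c, a)
        · exfalso
          rw [Prod.mk.injEq] at hv
          apply hc
          rw [← hv.1]
          exact hdep ω ω0 hpω hω0 (hv.2.trans hVω0.symm)
        · simp [hv]
    have hq0 : pmass p (fun ω => (Z ω, V ω)) (c0, a) = pmass p V a := by
      have := pmass_pair_sum p V Z a
      rwa [Finset.sum_eq_single c0 (fun c _ hc => hqz c hc) (by simp)] at this
    rw [Finset.sum_eq_single c0 (fun c _ hc => by simp [hqz c hc]) (by simp), hq0]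

/-- `condEnt p Z X = 0` forces `Z` to be a.e. a function of `X`. -/
lemma dep_of_condEnt_zero [Fintype α] [Fintype γ] [DecidableEq α] [DecidableEq γ]
    (p : Ω → ℝ) (hp0 : ∀ ω, 0 ≤ p ω) (Z : Ω → γ) (X : Ω → α)
    (h : condEnt p Z X = 0) :
    ∀ ω ω', p ω ≠ 0 → p ω' ≠ 0 → X ω = X ω' → Z ω = Z ω' := by
  set q : γ → α → ℝ := fun c a => pmass p (fun ω => (Z ω, X ω)) (c, a) with hq
  set P : α → ℝ := fun a => pmass p X a with hPdef
  have hqnn : ∀ c a, 0 ≤ q c a := fun c a => pmass_nonneg p hp0 _ _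
  have hqle : ∀ c a, q c a ≤ P a := fun c a => pmass_pair_le p hp0 X Z c a
  have hsum : ∀ a, ∑ c, q c a = P a := fun a => pmass_pair_sum p X Z a
  -- the termwise slack
  set t : γ → α → ℝ := fun c a => q c a * Real.logb 2 (P a) - q c a * Real.logb 2 (q c a) with ht
  have htnn : ∀ c a, 0 ≤ t c a := by
    intro c a
    rcases eq_or_lt_of_le (hqnn c a) with hq0 | hq0
    · simp [ht, ← hq0]
    · have hPpos : 0 < P a := lt_of_lt_of_le hq0 (hqle c a)
      have : Real.logb 2 (q c a) ≤ Real.logb 2 (P a) :=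
        (Real.logb_le_logb one_lt_two hq0 hPpos).2 (hqle c a)
      simp only [ht]
      nlinarith
  have hce : condEnt p Z X = ∑ a, ∑ c, t c a := by
    unfold condEnt ent
    rw [Fintype.sum_prod_type, Finset.sum_comm, ← Finset.sum_sub_distrib]
    refine Finset.sum_congr rfl fun a _ => ?_
    have : -(P a * Real.logb 2 (P a)) = ∑ c, -(q c a * Real.logb 2 (P a)) := by
      rw [Finset.sum_neg_distrib, ← Finset.sum_mul, hsum]
    rw [show pmass p X a = P a from rfl, this, ← Finset.sum_sub_distrib]
    refine Finset.sum_congr rfl fun c _ => ?_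
    simp only [ht]
    ring
  have hzero : ∀ a, ∀ c, t c a = 0 := by
    have h0 : ∑ a, ∑ c, t c a = 0 := by rw [← hce, h]
    intro a c
    have h1 := (Finset.sum_eq_zero_iff_of_nonneg
      (fun a _ => Finset.sum_nonneg fun c _ => htnn c a)).1 h0 a (Finset.mem_univ a)
    exact (Finset.sum_eq_zero_iff_of_nonneg (fun c _ => htnn c a)).1 h1 c (Finset.mem_univ c)
  have hkey : ∀ c a, 0 < q c a → q c a = P a := by
    intro c a hpos
    rcases eq_or_lt_of_le (hqle c a) with he | hlt
    · exact he
    · exfalso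
      have hPpos : 0 < P a := lt_trans hpos hlt
      have : Real.logb 2 (q c a) < Real.logb 2 (P a) :=
        Real.logb_lt_logb one_lt_two hpos hlt
      have ht0 := hzero a c
      simp only [ht] at ht0
      nlinarith
  intro ω ω' hω hω' hXX
  by_contra hne
  have key : ∀ ω1, p ω1 ≤ q (Z ω1) (X ω1) := by
    intro ω1
    have h0 : p ω1 = (if ((fun ω => (Z ω, X ω)) ω1) = (Z ω1, X ω1) then p ω1 else 0) := by simp
    rw [h0]
    exact Finset.single_le_sum
      (f := fun ω'' => if ((fun ω => (Z ω, X ω)) ω'') = (Z ω1, X ω1) then p ω'' else 0)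
      (fun ω'' _ => by
        show 0 ≤ if (Z ω'', X ω'') = (Z ω1, X ω1) then p ω'' else 0
        split <;> [exact hp0 ω''; exact le_rfl]) (Finset.mem_univ ω1)
  have hq1 : 0 < q (Z ω) (X ω) :=
    lt_of_lt_of_le (lt_of_le_of_ne (hp0 ω) (Ne.symm hω)) (key ω)
  have hq2 : 0 < q (Z ω') (X ω) := by
    rw [hXX]
    exact lt_of_lt_of_le (lt_of_le_of_ne (hp0 ω') (Ne.symm hω')) (key ω')
  have hPa : 0 < P (X ω) := lt_of_lt_of_le hq1 (hqle _ _)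
  have h2 : q (Z ω) (X ω) + q (Z ω') (X ω) ≤ P (X ω) :=
    calc q (Z ω) (X ω) + q (Z ω') (X ω)
        = ∑ c ∈ ({Z ω, Z ω'} : Finset γ), q c (X ω) :=
          (Finset.sum_pair (f := fun c => q c (X ω)) hne).symm
      _ ≤ ∑ c, q c (X ω) := Finset.sum_le_sum_of_subset_of_nonneg (Finset.subset_univ _)
          (fun c _ _ => hqnn c (X ω))
      _ = P (X ω) := hsum (X ω)
  rw [hkey _ _ hq1, hkey _ _ hq2] at h2
  linarith

end helpers


/-- if `H(Z|X) = 0` and `H(Z|Y) = 0` then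
`I(X;Y|W) = H(Z|W) + I(X;Y|(W,Z))`. -/
theorem stmt_6 {Ω α β γ δ : Type} [Fintype Ω] [Fintype α] [Fintype β] [Fintype γ] [Fintype δ]
    [DecidableEq α] [DecidableEq β] [DecidableEq γ] [DecidableEq δ]
    (p : Ω → ℝ) (hp0 : ∀ ω, 0 ≤ p ω) (hp1 : ∑ ω, p ω = 1)
    (W : Ω → δ) (X : Ω → α) (Y : Ω → β) (Z : Ω → γ)
    (hZX : condEnt p Z X = 0) (hZY : condEnt p Z Y = 0) :
    condMI p X Y W = condEnt p Z W + condMI p X Y (fun ω => (W ω, Z ω)) := by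
  have hdX := dep_of_condEnt_zero p hp0 Z X hZX
  have hdY := dep_of_condEnt_zero p hp0 Z Y hZY
  -- ent (W, Z) = ent W-with-Z via dependence? No: Z not a function of W. Just swap.
  have hswap : ent p (fun ω => (Z ω, W ω)) = ent p (fun ω => (W ω, Z ω)) := by
    have := ent_comp_inj p (fun ω => (Z ω, W ω)) Prod.swap Prod.swap_injective
    exact this.symm
  have h1 : ent p (fun ω => (X ω, (W ω, Z ω))) = ent p (fun ω => (X ω, W ω)) := by
    have he : Function.Injective (fun x : α × (δ × γ) => (x.2.2, (x.1, x.2.1))) := by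
      intro x y h
      simp only [Prod.mk.injEq] at h
      exact Prod.ext h.2.1 (Prod.ext h.2.2 h.1)
    have hrw := ent_comp_inj p (fun ω => (X ω, (W ω, Z ω))) _ he
    rw [← hrw]
    exact ent_pair_dep p hp0 (fun ω => (X ω, W ω)) Z
      (fun ω ω' hw hw' hvv => hdX ω ω' hw hw' (congrArg Prod.fst hvv))
  have h2 : ent p (fun ω => (Y ω, (W ω, Z ω))) = ent p (fun ω => (Y ω, W ω)) := by
    have he : Function.Injective (fun x : β × (δ × γ) => (x.2.2, (x.1, x.2.1))) := by
      intro x y h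
      simp only [Prod.mk.injEq] at h
      exact Prod.ext h.2.1 (Prod.ext h.2.2 h.1)
    have hrw := ent_comp_inj p (fun ω => (Y ω, (W ω, Z ω))) _ he
    rw [← hrw]
    exact ent_pair_dep p hp0 (fun ω => (Y ω, W ω)) Z
      (fun ω ω' hw hw' hvv => hdY ω ω' hw hw' (congrArg Prod.fst hvv))
  have h3 : ent p (fun ω => ((X ω, Y ω), (W ω, Z ω))) = ent p (fun ω => ((X ω, Y ω), W ω)) := by
    have he : Function.Injective (fun x : (α × β) × (δ × γ) => (x.2.2, (x.1, x.2.1))) := by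
      intro x y h
      simp only [Prod.mk.injEq] at h
      exact Prod.ext h.2.1 (Prod.ext h.2.2 h.1)
    have hrw := ent_comp_inj p (fun ω => ((X ω, Y ω), (W ω, Z ω))) _ he
    rw [← hrw]
    exact ent_pair_dep p hp0 (fun ω => ((X ω, Y ω), W ω)) Z
      (fun ω ω' hw hw' hvv => hdX ω ω' hw hw' (congrArg (Prod.fst ∘ Prod.fst) hvv))
  unfold condMI condEnt
  rw [h1, h2, h3, ← hswap]
  ring
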